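/- Let R be a commutative ring and M a multiplication R-module. Then the diameter of the M-intersection graph G_M(R) belongs to {0, 1, 2, ∞}. -/

import Mathlib

/-- The `M`-intersection graph of ideals of `R`: vertices are the nontrivial ideals of `R`,
and two distinct vertices `I`, `J` are adjacent iff `IM ∩ JM ≠ 0`. -/
def interGraph (R M : Type*) [CommRing R] [AddCommGroup M] [Module R M] :
    SimpleGraph {I : Ideal R // I ≠ ⊥ ∧ I ≠ ⊤} where
  Adj I J := I ≠ J ∧ (I.1 • ⊤ ⊓ J.1 • ⊤ : Submodule R M) ≠ ⊥
  symm := ⟨fun I J h => ⟨h.1.symm, by rw [inf_comm]; exact h.2⟩⟩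
  loopless := ⟨fun I h => h.1 rfl⟩

theorem edist_le_two_of_reachable (R M : Type*) [CommRing R] [AddCommGroup M] [Module R M]
    (hmul : ∀ N : Submodule R M, ∃ I : Ideal R, N = I • ⊤)
    (u v : {I : Ideal R // I ≠ ⊥ ∧ I ≠ ⊤}) (hr : (interGraph R M).Reachable u v) :
    (interGraph R M).edist u v ≤ 2 := by
  set G := interGraph R M with hGdef
  rcases eq_or_ne u v with rfl | huv
  · simp [SimpleGraph.edist_self]
  by_cases hadj : G.Adj u v
  · calc G.edist u v ≤ hadj.toWalk.length := SimpleGraph.edist_le hadj.toWalk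
    _ ≤ 2 := by simp
  -- u ≠ v and not adjacent, so uM ⊓ vM = ⊥
  have h0 : (u.1 • ⊤ ⊓ v.1 • ⊤ : Submodule R M) = ⊥ := by
    by_contra h
    exact hadj ⟨huv, h⟩
  obtain ⟨p⟩ := hr
  -- uM ≠ ⊥
  have hu : (u.1 • ⊤ : Submodule R M) ≠ ⊥ := by
    cases p with
    | nil => exact absurd rfl huv
    | cons h q =>
      intro hb
      apply h.2
      rw [hb]
      exact bot_inf_eq _
  have hv : (v.1 • ⊤ : Submodule R M) ≠ ⊥ := by
    cases p.reverse with
    | nil => exact absurd rfl huv.symm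
    | cons h q =>
      intro hb
      apply h.2
      rw [hb]
      exact bot_inf_eq _
  -- find a common neighbor W
  have hW : ∃ W, G.Adj u W ∧ G.Adj W v := by
    by_cases htop : (u.1 • ⊤ ⊔ v.1 • ⊤ : Submodule R M) = ⊤
    · -- walk induction: follow the walk until the image first meets vM
      have aux : ∀ (w x : {I : Ideal R // I ≠ ⊥ ∧ I ≠ ⊤}) (q : G.Walk w x), x = v →
          (w.1 • ⊤ : Submodule R M) ≤ u.1 • ⊤ →
          ∃ W : {I : Ideal R // I ≠ ⊥ ∧ I ≠ ⊤},
            (W.1 • ⊤ ⊓ u.1 • ⊤ : Submodule R M) ≠ ⊥ ∧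
            (W.1 • ⊤ ⊓ v.1 • ⊤ : Submodule R M) ≠ ⊥ := by
        intro w x q
        induction q with
        | nil =>
          intro hx hle
          subst hx
          exact absurd (le_bot_iff.mp ((le_inf hle le_rfl).trans h0.le)) hv
        | @cons w w' x h q ih =>
          intro hx hle
          by_cases h' : (w'.1 • ⊤ ⊓ v.1 • ⊤ : Submodule R M) = ⊥
          · apply ih hx
            have hcalc : (w'.1 • ⊤ : Submodule R M) = w'.1 • (u.1 • ⊤) ⊔ w'.1 • (v.1 • ⊤) := by
              rw [← Submodule.smul_sup, htop]
            rw [hcalc]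
            apply sup_le Submodule.smul_le_right
            have hh : (w'.1 • (v.1 • ⊤) : Submodule R M) ≤ w'.1 • ⊤ ⊓ v.1 • ⊤ :=
              le_inf (smul_mono_right _ le_top) Submodule.smul_le_right
            rw [h'] at hh
            exact hh.trans bot_le
          · refine ⟨w', ?_, h'⟩
            intro hb
            apply h.2
            have hle2 : (w.1 • ⊤ ⊓ w'.1 • ⊤ : Submodule R M) ≤ w'.1 • ⊤ ⊓ u.1 • ⊤ :=
              le_inf inf_le_right (inf_le_left.trans hle)
            exact le_bot_iff.mp (hle2.trans hb.le)
      obtain ⟨W, hWu, hWv⟩ := aux u v p rfl le_rfl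
      have hWu' : W ≠ u := by rintro rfl; exact hWv h0
      have hWv' : W ≠ v := by rintro rfl; exact hWu (by rw [inf_comm]; exact h0)
      exact ⟨W, ⟨hWu'.symm, by rwa [inf_comm] at hWu⟩, ⟨hWv', hWv⟩⟩
    · -- K with KM = uM ⊔ vM is a common neighbor
      obtain ⟨K, hK⟩ := hmul (u.1 • ⊤ ⊔ v.1 • ⊤)
      have hKbot : K ≠ ⊥ := by
        rintro rfl
        rw [Submodule.bot_smul] at hK
        exact hu (le_antisymm (le_sup_left.trans hK.le) bot_le)
      have hKtop : K ≠ ⊤ := by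
        rintro rfl
        rw [Submodule.top_smul] at hK
        exact htop hK
      let W : {I : Ideal R // I ≠ ⊥ ∧ I ≠ ⊤} := ⟨K, hKbot, hKtop⟩
      have huW : (u.1 • ⊤ : Submodule R M) ≤ W.1 • ⊤ := hK ▸ le_sup_left
      have hvW : (v.1 • ⊤ : Submodule R M) ≤ W.1 • ⊤ := hK ▸ le_sup_right
      have hWu' : u ≠ W := by
        intro he
        apply hv
        have hh : (v.1 • ⊤ : Submodule R M) ≤ u.1 • ⊤ := by rw [he]; exact hvW
        exact le_bot_iff.mp ((le_inf hh le_rfl).trans h0.le)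
      have hWv' : W ≠ v := by
        intro he
        apply hu
        have hh : (u.1 • ⊤ : Submodule R M) ≤ v.1 • ⊤ := by rw [← he]; exact huW
        exact le_bot_iff.mp ((le_inf le_rfl hh).trans h0.le)
      refine ⟨W, ⟨hWu', ?_⟩, ⟨hWv', ?_⟩⟩
      · rw [inf_eq_left.mpr huW]; exact hu
      · rw [inf_eq_right.mpr hvW]; exact hv
  obtain ⟨W, h1, h2⟩ := hW
  calc G.edist u v ≤ (SimpleGraph.Walk.cons h1 h2.toWalk).length :=
        SimpleGraph.edist_le _
    _ ≤ 2 := by simp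

/-- If `M` is a multiplication module over a commutative ring `R`, then the
diameter of `G_M(R)` lies in `{0, 1, 2, ∞}`. -/
theorem ediam_mem (R M : Type*) [CommRing R] [AddCommGroup M] [Module R M] [Nontrivial M]
    (hmul : ∀ N : Submodule R M, ∃ I : Ideal R, N = I • ⊤) :
    (interGraph R M).ediam = 0 ∨ (interGraph R M).ediam = 1 ∨
      (interGraph R M).ediam = 2 ∨ (interGraph R M).ediam = ⊤ := by
  by_cases hconn : ∀ u v : {I : Ideal R // I ≠ ⊥ ∧ I ≠ ⊤}, (interGraph R M).Reachable u v
  · have h2 : (interGraph R M).ediam ≤ 2 :=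
      SimpleGraph.ediam_le_of_edist_le fun u v =>
        edist_le_two_of_reachable R M hmul u v (hconn u v)
    have hne : (interGraph R M).ediam ≠ ⊤ := by
      intro h
      rw [h] at h2
      exact absurd h2 (by decide)
    lift (interGraph R M).ediam to ℕ using hne with n hn
    have hn2 : n ≤ 2 := by exact_mod_cast h2
    interval_cases n
    · exact Or.inl (by norm_num)
    · exact Or.inr (Or.inl (by norm_num))
    · exact Or.inr (Or.inr (Or.inl (by norm_num)))
  · push_neg at hconn
    obtain ⟨x, y, hxy⟩ := hconn
    refine Or.inr (Or.inr (Or.inr (le_antisymm le_top ?_)))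
    rw [← SimpleGraph.edist_eq_top_of_not_reachable hxy]
    exact SimpleGraph.edist_le_ediam
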